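/- Let β > 0, ω > 0, set γ = e^(−βω), η = tanh(βω/2), let λ ∈ [−1,1] and t ≥ 0. Let σ be the 6×6 real block-diagonal matrix consisting of three 2×2 blocks [[0,1],[−1,0]] along the diagonal, let B be the 6×6 real matrix written in 2×2 blocks as [[0,0,1₂],[0,0,1₂],[1₂,1₂,0]], set 𝓛 = (γ−1)·1₆ + 2ω·σ + ((γ−1)λ/√2)·B and M_t = exp(t·𝓛). Then, regarding all matrices as complex matrices, the Hermitian 6×6 matrix (Σ_β + (i/2)·σ) − M_t·(Σ_β + (i/2)·σ)·M_tᵀ is positive semidefinite, where Σ_β = ((η²+1)/(4η))·1₆. -/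

import Mathlib

open Matrix
open scoped ComplexOrder

/-- The 6×6 symplectic matrix: three 2×2 blocks `[[0,1],[−1,0]]` along the diagonal. -/
def sigma6 : Matrix (Fin 6) (Fin 6) ℝ :=
  Matrix.of fun i j =>
    if i.val / 2 = j.val / 2 then
      (if i.val % 2 = 0 ∧ j.val % 2 = 1 then 1
       else if i.val % 2 = 1 ∧ j.val % 2 = 0 then -1 else 0)
    else 0

/-- The 6×6 matrix written in 2×2 blocks as `[[0,0,1₂],[0,0,1₂],[1₂,1₂,0]]`. -/
def B6 : Matrix (Fin 6) (Fin 6) ℝ :=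
  Matrix.of fun i j =>
    if ((i.val / 2 < 2 ∧ j.val / 2 = 2) ∨ (i.val / 2 = 2 ∧ j.val / 2 < 2)) ∧
        i.val % 2 = j.val % 2 then 1 else 0

namespace CPaux

open NormedSpace

/-- Spectral projection of `B6` for eigenvalue `√2`. -/
noncomputable def Qp : Matrix (Fin 6) (Fin 6) ℝ :=
  Matrix.of fun i j =>
    if i.val % 2 = j.val % 2 then
      (if i.val / 2 = 2 then (if j.val / 2 = 2 then 1/2 else Real.sqrt 2/4)
       else (if j.val / 2 = 2 then Real.sqrt 2/4 else 1/4))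
    else 0

/-- Spectral projection of `B6` for eigenvalue `-√2`. -/
noncomputable def Qm : Matrix (Fin 6) (Fin 6) ℝ :=
  Matrix.of fun i j =>
    if i.val % 2 = j.val % 2 then
      (if i.val / 2 = 2 then (if j.val / 2 = 2 then 1/2 else -(Real.sqrt 2/4))
       else (if j.val / 2 = 2 then -(Real.sqrt 2/4) else 1/4))
    else 0

/-- Spectral projection of `B6` for eigenvalue `0`. -/
noncomputable def Q0 : Matrix (Fin 6) (Fin 6) ℝ :=
  Matrix.of fun i j =>
    if i.val % 2 = j.val % 2 ∧ i.val / 2 ≠ 2 ∧ j.val / 2 ≠ 2 then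
      (if i.val / 2 = j.val / 2 then 1/2 else -(1/2))
    else 0

theorem hr2 : Real.sqrt 2 * Real.sqrt 2 = 2 := Real.mul_self_sqrt (by norm_num)

theorem hBsigma : B6 * sigma6 = sigma6 * B6 := by
  ext i j
  fin_cases i <;> fin_cases j <;>
    simp (config := {decide := true}) only [Matrix.mul_apply, Fin.sum_univ_six, Matrix.of_apply, Matrix.add_apply, Matrix.smul_apply, Matrix.transpose_apply, Matrix.one_apply, Matrix.neg_apply, Matrix.zero_apply, smul_eq_mul, Fin.isValue, Nat.reduceDiv, Nat.reduceMod, reduceIte, mul_zero, zero_mul, add_zero, zero_add, mul_one, one_mul, neg_zero, neg_neg, sigma6, B6, Qp, Qm, Q0]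

theorem hsigmaT : sigma6ᵀ = -sigma6 := by
  ext i j
  fin_cases i <;> fin_cases j <;>
    simp (config := {decide := true}) only [Matrix.mul_apply, Fin.sum_univ_six, Matrix.of_apply, Matrix.add_apply, Matrix.smul_apply, Matrix.transpose_apply, Matrix.one_apply, Matrix.neg_apply, Matrix.zero_apply, smul_eq_mul, Fin.isValue, Nat.reduceDiv, Nat.reduceMod, reduceIte, mul_zero, zero_mul, add_zero, zero_add, mul_one, one_mul, neg_zero, neg_neg, sigma6, B6, Qp, Qm, Q0]

theorem hsigmasigma : sigma6 * sigma6 = -1 := by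
  ext i j
  fin_cases i <;> fin_cases j <;>
    simp (config := {decide := true}) only [Matrix.mul_apply, Fin.sum_univ_six, Matrix.of_apply, Matrix.add_apply, Matrix.smul_apply, Matrix.transpose_apply, Matrix.one_apply, Matrix.neg_apply, Matrix.zero_apply, smul_eq_mul, Fin.isValue, Nat.reduceDiv, Nat.reduceMod, reduceIte, mul_zero, zero_mul, add_zero, zero_add, mul_one, one_mul, neg_zero, neg_neg, sigma6, B6, Qp, Qm, Q0]

theorem hBT : B6ᵀ = B6 := by
  ext i j
  fin_cases i <;> fin_cases j <;>
    simp (config := {decide := true}) only [Matrix.mul_apply, Fin.sum_univ_six, Matrix.of_apply, Matrix.add_apply, Matrix.smul_apply, Matrix.transpose_apply, Matrix.one_apply, Matrix.neg_apply, Matrix.zero_apply, smul_eq_mul, Fin.isValue, Nat.reduceDiv, Nat.reduceMod, reduceIte, mul_zero, zero_mul, add_zero, zero_add, mul_one, one_mul, neg_zero, neg_neg, sigma6, B6, Qp, Qm, Q0]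

set_option maxHeartbeats 1600000 in
theorem hQsum : Qp + Qm + Q0 = 1 := by
  ext i j
  fin_cases i <;> fin_cases j <;>
    simp (config := {decide := true}) only [Matrix.mul_apply, Fin.sum_univ_six, Matrix.of_apply, Matrix.add_apply, Matrix.smul_apply, Matrix.transpose_apply, Matrix.one_apply, Matrix.neg_apply, Matrix.zero_apply, smul_eq_mul, Fin.isValue, Nat.reduceDiv, Nat.reduceMod, reduceIte, mul_zero, zero_mul, add_zero, zero_add, mul_one, one_mul, neg_zero, neg_neg, sigma6, B6, Qp, Qm, Q0] <;>
    (ring_nf; try nlinarith [hr2])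

theorem hQpT : Qpᵀ = Qp := by
  ext i j
  fin_cases i <;> fin_cases j <;>
    simp (config := {decide := true}) only [Matrix.mul_apply, Fin.sum_univ_six, Matrix.of_apply, Matrix.add_apply, Matrix.smul_apply, Matrix.transpose_apply, Matrix.one_apply, Matrix.neg_apply, Matrix.zero_apply, smul_eq_mul, Fin.isValue, Nat.reduceDiv, Nat.reduceMod, reduceIte, mul_zero, zero_mul, add_zero, zero_add, mul_one, one_mul, neg_zero, neg_neg, sigma6, B6, Qp, Qm, Q0]

theorem hQmT : Qmᵀ = Qm := by
  ext i j
  fin_cases i <;> fin_cases j <;>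
    simp (config := {decide := true}) only [Matrix.mul_apply, Fin.sum_univ_six, Matrix.of_apply, Matrix.add_apply, Matrix.smul_apply, Matrix.transpose_apply, Matrix.one_apply, Matrix.neg_apply, Matrix.zero_apply, smul_eq_mul, Fin.isValue, Nat.reduceDiv, Nat.reduceMod, reduceIte, mul_zero, zero_mul, add_zero, zero_add, mul_one, one_mul, neg_zero, neg_neg, sigma6, B6, Qp, Qm, Q0]

theorem hQ0T : Q0ᵀ = Q0 := by
  ext i j
  fin_cases i <;> fin_cases j <;>
    simp (config := {decide := true}) only [Matrix.mul_apply, Fin.sum_univ_six, Matrix.of_apply, Matrix.add_apply, Matrix.smul_apply, Matrix.transpose_apply, Matrix.one_apply, Matrix.neg_apply, Matrix.zero_apply, smul_eq_mul, Fin.isValue, Nat.reduceDiv, Nat.reduceMod, reduceIte, mul_zero, zero_mul, add_zero, zero_add, mul_one, one_mul, neg_zero, neg_neg, sigma6, B6, Qp, Qm, Q0]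

set_option maxHeartbeats 1600000 in
theorem hQp2 : Qp * Qp = Qp := by
  ext i j
  fin_cases i <;> fin_cases j <;>
    simp (config := {decide := true}) only [Matrix.mul_apply, Fin.sum_univ_six, Matrix.of_apply, Matrix.add_apply, Matrix.smul_apply, Matrix.transpose_apply, Matrix.one_apply, Matrix.neg_apply, Matrix.zero_apply, smul_eq_mul, Fin.isValue, Nat.reduceDiv, Nat.reduceMod, reduceIte, mul_zero, zero_mul, add_zero, zero_add, mul_one, one_mul, neg_zero, neg_neg, sigma6, B6, Qp, Qm, Q0] <;>
    (ring_nf; try nlinarith [hr2])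

set_option maxHeartbeats 1600000 in
theorem hQm2 : Qm * Qm = Qm := by
  ext i j
  fin_cases i <;> fin_cases j <;>
    simp (config := {decide := true}) only [Matrix.mul_apply, Fin.sum_univ_six, Matrix.of_apply, Matrix.add_apply, Matrix.smul_apply, Matrix.transpose_apply, Matrix.one_apply, Matrix.neg_apply, Matrix.zero_apply, smul_eq_mul, Fin.isValue, Nat.reduceDiv, Nat.reduceMod, reduceIte, mul_zero, zero_mul, add_zero, zero_add, mul_one, one_mul, neg_zero, neg_neg, sigma6, B6, Qp, Qm, Q0] <;>
    (ring_nf; try nlinarith [hr2])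

set_option maxHeartbeats 1600000 in
theorem hQ02 : Q0 * Q0 = Q0 := by
  ext i j
  fin_cases i <;> fin_cases j <;>
    simp (config := {decide := true}) only [Matrix.mul_apply, Fin.sum_univ_six, Matrix.of_apply, Matrix.add_apply, Matrix.smul_apply, Matrix.transpose_apply, Matrix.one_apply, Matrix.neg_apply, Matrix.zero_apply, smul_eq_mul, Fin.isValue, Nat.reduceDiv, Nat.reduceMod, reduceIte, mul_zero, zero_mul, add_zero, zero_add, mul_one, one_mul, neg_zero, neg_neg, sigma6, B6, Qp, Qm, Q0] <;>
    (ring_nf; try nlinarith [hr2])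

set_option maxHeartbeats 1600000 in
theorem hsigmaQp : sigma6 * Qp = Qp * sigma6 := by
  ext i j
  fin_cases i <;> fin_cases j <;>
    simp (config := {decide := true}) only [Matrix.mul_apply, Fin.sum_univ_six, Matrix.of_apply, Matrix.add_apply, Matrix.smul_apply, Matrix.transpose_apply, Matrix.one_apply, Matrix.neg_apply, Matrix.zero_apply, smul_eq_mul, Fin.isValue, Nat.reduceDiv, Nat.reduceMod, reduceIte, mul_zero, zero_mul, add_zero, zero_add, mul_one, one_mul, neg_zero, neg_neg, sigma6, B6, Qp, Qm, Q0] <;>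
    (ring_nf; try nlinarith [hr2])

set_option maxHeartbeats 1600000 in
theorem hsigmaQm : sigma6 * Qm = Qm * sigma6 := by
  ext i j
  fin_cases i <;> fin_cases j <;>
    simp (config := {decide := true}) only [Matrix.mul_apply, Fin.sum_univ_six, Matrix.of_apply, Matrix.add_apply, Matrix.smul_apply, Matrix.transpose_apply, Matrix.one_apply, Matrix.neg_apply, Matrix.zero_apply, smul_eq_mul, Fin.isValue, Nat.reduceDiv, Nat.reduceMod, reduceIte, mul_zero, zero_mul, add_zero, zero_add, mul_one, one_mul, neg_zero, neg_neg, sigma6, B6, Qp, Qm, Q0] <;>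
    (ring_nf; try nlinarith [hr2])

set_option maxHeartbeats 1600000 in
theorem hsigmaQ0 : sigma6 * Q0 = Q0 * sigma6 := by
  ext i j
  fin_cases i <;> fin_cases j <;>
    simp (config := {decide := true}) only [Matrix.mul_apply, Fin.sum_univ_six, Matrix.of_apply, Matrix.add_apply, Matrix.smul_apply, Matrix.transpose_apply, Matrix.one_apply, Matrix.neg_apply, Matrix.zero_apply, smul_eq_mul, Fin.isValue, Nat.reduceDiv, Nat.reduceMod, reduceIte, mul_zero, zero_mul, add_zero, zero_add, mul_one, one_mul, neg_zero, neg_neg, sigma6, B6, Qp, Qm, Q0] <;>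
    (ring_nf; try nlinarith [hr2])

set_option maxHeartbeats 1600000 in
theorem hBQp : B6 * Qp = Real.sqrt 2 • Qp := by
  ext i j
  fin_cases i <;> fin_cases j <;>
    simp (config := {decide := true}) only [Matrix.mul_apply, Fin.sum_univ_six, Matrix.of_apply, Matrix.add_apply, Matrix.smul_apply, Matrix.transpose_apply, Matrix.one_apply, Matrix.neg_apply, Matrix.zero_apply, smul_eq_mul, Fin.isValue, Nat.reduceDiv, Nat.reduceMod, reduceIte, mul_zero, zero_mul, add_zero, zero_add, mul_one, one_mul, neg_zero, neg_neg, sigma6, B6, Qp, Qm, Q0] <;>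
    (ring_nf; try nlinarith [hr2])

set_option maxHeartbeats 1600000 in
theorem hBQm : B6 * Qm = (-Real.sqrt 2) • Qm := by
  ext i j
  fin_cases i <;> fin_cases j <;>
    simp (config := {decide := true}) only [Matrix.mul_apply, Fin.sum_univ_six, Matrix.of_apply, Matrix.add_apply, Matrix.smul_apply, Matrix.transpose_apply, Matrix.one_apply, Matrix.neg_apply, Matrix.zero_apply, smul_eq_mul, Fin.isValue, Nat.reduceDiv, Nat.reduceMod, reduceIte, mul_zero, zero_mul, add_zero, zero_add, mul_one, one_mul, neg_zero, neg_neg, sigma6, B6, Qp, Qm, Q0] <;>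
    (ring_nf; try nlinarith [hr2])

set_option maxHeartbeats 1600000 in
theorem hBQ0 : B6 * Q0 = 0 := by
  ext i j
  fin_cases i <;> fin_cases j <;>
    simp (config := {decide := true}) only [Matrix.mul_apply, Fin.sum_univ_six, Matrix.of_apply, Matrix.add_apply, Matrix.smul_apply, Matrix.transpose_apply, Matrix.one_apply, Matrix.neg_apply, Matrix.zero_apply, smul_eq_mul, Fin.isValue, Nat.reduceDiv, Nat.reduceMod, reduceIte, mul_zero, zero_mul, add_zero, zero_add, mul_one, one_mul, neg_zero, neg_neg, sigma6, B6, Qp, Qm, Q0] <;>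
    (ring_nf; try nlinarith [hr2])

/-- If `X * Q = 0` then `exp X * Q = Q`. -/
theorem exp_mul_eq_of_mul_eq_zero {X Q : Matrix (Fin 6) (Fin 6) ℝ} (h : X * Q = 0) :
    exp X * Q = Q := by
  letI : SeminormedRing (Matrix (Fin 6) (Fin 6) ℝ) := Matrix.linftyOpSemiNormedRing
  letI : NormedRing (Matrix (Fin 6) (Fin 6) ℝ) := Matrix.linftyOpNormedRing
  letI : NormedAlgebra ℝ (Matrix (Fin 6) (Fin 6) ℝ) := Matrix.linftyOpNormedAlgebra
  rw [exp_eq_tsum (𝕂 := ℝ)]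
  beta_reduce
  erw [← (expSeries_summable' (𝕂 := ℝ) X).tsum_mul_right Q,
    tsum_eq_single 0 ?_]
  · simp
  · intro n hn
    obtain ⟨k, rfl⟩ := Nat.exists_eq_succ_of_ne_zero hn
    rw [smul_mul_assoc, pow_succ, mul_assoc, h, mul_zero, smul_zero]

theorem exp_smul_one (c : ℝ) :
    exp (c • (1 : Matrix (Fin 6) (Fin 6) ℝ)) = Real.exp c • 1 := by
  letI : SeminormedRing (Matrix (Fin 6) (Fin 6) ℝ) := Matrix.linftyOpSemiNormedRing
  letI : NormedRing (Matrix (Fin 6) (Fin 6) ℝ) := Matrix.linftyOpNormedRing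
  letI : NormedAlgebra ℝ (Matrix (Fin 6) (Fin 6) ℝ) := Matrix.linftyOpNormedAlgebra
  have h1 : c • (1 : Matrix (Fin 6) (Fin 6) ℝ) = algebraMap ℝ (Matrix (Fin 6) (Fin 6) ℝ) c :=
    (Algebra.algebraMap_eq_smul_one c).symm
  erw [h1, ← map_exp (algebraMap ℝ (Matrix (Fin 6) (Fin 6) ℝ)) (continuous_algebraMap _ _) c,
    Algebra.algebraMap_eq_smul_one, Real.exp_eq_exp_ℝ]

/-- If `A * Q = a • Q` then `exp A * Q = (exp a) • Q`. -/
theorem exp_eigen {A Q : Matrix (Fin 6) (Fin 6) ℝ} {a : ℝ} (h : A * Q = a • Q) :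
    exp A * Q = Real.exp a • Q := by
  have h0 : (A - a • 1) * Q = 0 := by
    rw [sub_mul, h, smul_mul_assoc, one_mul, sub_self]
  have hc : Commute (A - a • (1 : Matrix (Fin 6) (Fin 6) ℝ)) (a • 1) :=
    (Commute.one_right _).smul_right a
  have hsplit : exp A = exp (A - a • 1) * exp (a • (1 : Matrix (Fin 6) (Fin 6) ℝ)) := by
    rw [← Matrix.exp_add_of_commute _ _ hc, sub_add_cancel]
  rw [hsplit, exp_smul_one, mul_assoc, smul_mul_assoc, one_mul, mul_smul_comm,
    exp_mul_eq_of_mul_eq_zero h0]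

/-- Key algebraic identity for the positivity proof. -/
theorem key {F G P : Matrix (Fin 6) (Fin 6) ℂ} {e : ℂ} (hFP : F * P = e • P)
    (hGP : G * P = P * G) (hP2 : P * P = P) :
    (G - F * G * F) * P = (1 - e * e) • (P * G * P) := by
  have h1 : G * P = P * G * P := by
    calc G * P = G * (P * P) := by rw [hP2]
      _ = G * P * P := by rw [mul_assoc]
      _ = P * G * P := by rw [hGP]
  have h1' : P * G = P * G * P := by
    calc P * G = G * P := hGP.symm
      _ = P * G * P := h1
  have h2 : F * G * F * P = (e * e) • (P * G * P) := by
    calc F * G * F * P = F * G * (F * P) := by rw [mul_assoc]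
      _ = F * G * (e • P) := by rw [hFP]
      _ = e • (F * (G * P)) := by rw [mul_smul_comm, mul_assoc]
      _ = e • (F * (P * G)) := by rw [hGP]
      _ = e • (F * P * G) := by rw [mul_assoc]
      _ = e • ((e • P) * G) := by rw [hFP]
      _ = (e * e) • (P * G) := by rw [smul_mul_assoc, smul_smul]
      _ = (e * e) • (P * G * P) := congrArg (fun X => (e * e) • X) h1'
  rw [sub_mul, h1, h2, sub_smul, one_smul]

theorem psd_smul {A : Matrix (Fin 6) (Fin 6) ℂ} (hA : A.PosSemidef) {r : ℝ} (hr : 0 ≤ r) :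
    (((r : ℝ) : ℂ) • A).PosSemidef := by
  refine ⟨?_, fun x => ?_⟩
  · rw [Matrix.IsHermitian, Matrix.conjTranspose_smul, Complex.star_def, Complex.conj_ofReal,
      hA.1.eq]
  · exact (hA.smul (Complex.zero_le_real.mpr hr)).2 x

theorem psd_add {A B : Matrix (Fin 6) (Fin 6) ℂ} (hA : A.PosSemidef) (hB : B.PosSemidef) :
    (A + B).PosSemidef := by
  refine ⟨hA.1.add hB.1, fun x => ?_⟩
  simpa [mul_add, add_mul] using add_nonneg (hA.2 x) (hB.2 x)

end CPaux

set_option maxHeartbeats 1000000 in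
open CPaux NormedSpace in
/-- Complete positivity condition of the limiting Gaussian quasi-free semigroup:
`(Σ_β + (i/2)σ) − M_t(Σ_β + (i/2)σ)M_tᵀ ≥ 0` as a complex Hermitian matrix, where
`M_t = exp(t𝓛)`, `𝓛 = (γ−1)·1₆ + 2ω·σ + ((γ−1)λ/√2)·B`, `γ = e^{−βω}`,
`η = tanh(βω/2)`, `Σ_β = ((η²+1)/(4η))·1₆`, `|λ| ≤ 1`, `t ≥ 0`. -/
theorem complete_positivity_condition (β ω : ℝ) (hβ : 0 < β) (hω : 0 < ω)
    (γ η lam t : ℝ) (hγ : γ = Real.exp (-(β * ω))) (hη : η = Real.tanh (β * ω / 2))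
    (hlam : lam ∈ Set.Icc (-1 : ℝ) 1) (ht : 0 ≤ t)
    (L M : Matrix (Fin 6) (Fin 6) ℝ)
    (hL : L = (γ - 1) • (1 : Matrix (Fin 6) (Fin 6) ℝ) + (2 * ω) • sigma6 +
      ((γ - 1) * lam / Real.sqrt 2) • B6)
    (hM : M = NormedSpace.exp (t • L))
    (G : Matrix (Fin 6) (Fin 6) ℂ)
    (hG : G = (((η ^ 2 + 1) / (4 * η) : ℝ) : ℂ) • (1 : Matrix (Fin 6) (Fin 6) ℂ) +
      (Complex.I / 2) • sigma6.map Complex.ofReal) :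
    (G - (M.map Complex.ofReal) * G * (M.map Complex.ofReal)ᵀ).PosSemidef := by
  obtain ⟨hlam1, hlam2⟩ := hlam
  have hrpos : (0:ℝ) < Real.sqrt 2 := Real.sqrt_pos.mpr (by norm_num)
  -- basic scalars
  set s : ℝ := t * (γ - 1) with hs
  have hγ1 : γ ≤ 1 := by
    rw [hγ]; exact Real.exp_le_one_iff.mpr (by nlinarith)
  have hsle : s ≤ 0 := mul_nonpos_of_nonneg_of_nonpos ht (by linarith)
  have hηpos : 0 < η := by
    rw [hη, Real.tanh_eq_sinh_div_cosh]
    exact div_pos (by rw [Real.sinh_pos_iff]; positivity) (Real.cosh_pos _)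
  -- the symmetric part of the generator
  set A : Matrix (Fin 6) (Fin 6) ℝ := 1 + (lam / Real.sqrt 2) • B6 with hA
  have htL : t • L = s • A + (2 * ω * t) • sigma6 := by
    rw [hL, hA]
    ext i j
    simp only [Matrix.smul_apply, Matrix.add_apply, smul_eq_mul]
    ring
  have hAσ : A * sigma6 = sigma6 * A := by
    rw [hA, add_mul, mul_add, one_mul, mul_one, smul_mul_assoc, mul_smul_comm, hBsigma]
  have hAT : Aᵀ = A := by
    rw [hA, Matrix.transpose_add, Matrix.transpose_one, Matrix.transpose_smul, hBT]
  have hcomm : Commute (s • A) ((2 * ω * t) • sigma6) :=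
    ((show Commute A sigma6 from hAσ).smul_left s).smul_right (2 * ω * t)
  set Er : Matrix (Fin 6) (Fin 6) ℝ := exp (s • A) with hEr
  set Rr : Matrix (Fin 6) (Fin 6) ℝ := exp ((2 * ω * t) • sigma6) with hRr
  have hMfact : M = Er * Rr := by
    rw [hM, htL, Matrix.exp_add_of_commute _ _ hcomm]
  -- properties of the rotation part
  have hRσ : sigma6 * Rr = Rr * sigma6 :=
    (((Commute.refl sigma6).smul_right (2 * ω * t)).exp_right).eq
  have hRT : Rrᵀ = exp (-((2 * ω * t) • sigma6)) := by
    rw [← Matrix.exp_transpose, Matrix.transpose_smul, hsigmaT, smul_neg]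
  have hRRT : Rr * Rrᵀ = 1 := by
    rw [hRT, hRr, ← Matrix.exp_add_of_commute _ _ ((Commute.refl ((2 * ω * t) • sigma6)).neg_right),
      add_neg_cancel, exp_zero]
  -- properties of the symmetric part
  have hET : Erᵀ = Er := by
    rw [hEr, ← Matrix.exp_transpose, Matrix.transpose_smul, hAT]
  have hEσ : sigma6 * Er = Er * sigma6 :=
    (((show Commute sigma6 A from hAσ.symm).smul_right s).exp_right).eq
  -- eigenrelations
  have hAQp : A * Qp = (1 + lam) • Qp := by
    rw [hA, add_mul, one_mul, smul_mul_assoc, hBQp, smul_smul,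
      div_mul_cancel₀ _ (ne_of_gt hrpos), add_smul, one_smul]
  have hAQm : A * Qm = (1 - lam) • Qm := by
    rw [hA, add_mul, one_mul, smul_mul_assoc, hBQm, smul_smul]
    rw [show lam / Real.sqrt 2 * -Real.sqrt 2 = -lam by
      field_simp]
    rw [sub_smul, one_smul, neg_smul, sub_eq_add_neg]
  have hAQ0 : A * Q0 = (1:ℝ) • Q0 := by
    rw [hA, add_mul, one_mul, smul_mul_assoc, hBQ0, smul_zero, add_zero, one_smul]
  have hEQp : Er * Qp = Real.exp (s * (1 + lam)) • Qp := by
    refine exp_eigen ?_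
    rw [smul_mul_assoc, hAQp, smul_smul]
  have hEQm : Er * Qm = Real.exp (s * (1 - lam)) • Qm := by
    refine exp_eigen ?_
    rw [smul_mul_assoc, hAQm, smul_smul]
  have hEQ0 : Er * Q0 = Real.exp (s * 1) • Q0 := by
    refine exp_eigen ?_
    rw [smul_mul_assoc, hAQ0, smul_smul]
  -- complexification
  set φ : Matrix (Fin 6) (Fin 6) ℝ →+* Matrix (Fin 6) (Fin 6) ℂ :=
    (Complex.ofRealHom.mapMatrix) with hφ
  have hφapp : ∀ X : Matrix (Fin 6) (Fin 6) ℝ, φ X = X.map Complex.ofReal := fun X => rfl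
  have hφsmul : ∀ (r : ℝ) (X : Matrix (Fin 6) (Fin 6) ℝ),
      φ (r • X) = ((r : ℂ)) • φ X := by
    intro r X
    ext i j
    simp [hφapp, Matrix.map_apply, Matrix.smul_apply]
  have hφT : ∀ X : Matrix (Fin 6) (Fin 6) ℝ, φ (Xᵀ) = (φ X)ᵀ := by
    intro X; ext i j; simp [hφapp, Matrix.map_apply]
  have hφH : ∀ X : Matrix (Fin 6) (Fin 6) ℝ, (φ X)ᴴ = φ (Xᵀ) := by
    intro X; ext i j
    simp [hφapp, Matrix.map_apply, Matrix.conjTranspose_apply, Complex.conj_ofReal]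
  set S : Matrix (Fin 6) (Fin 6) ℂ := sigma6.map Complex.ofReal with hS
  have hSφ : S = φ sigma6 := rfl
  set F : Matrix (Fin 6) (Fin 6) ℂ := φ Er with hF
  set R : Matrix (Fin 6) (Fin 6) ℂ := φ Rr with hR
  set Pp : Matrix (Fin 6) (Fin 6) ℂ := φ Qp with hPp
  set Pm : Matrix (Fin 6) (Fin 6) ℂ := φ Qm with hPm
  set P0 : Matrix (Fin 6) (Fin 6) ℂ := φ Q0 with hP0
  set c : ℝ := (η ^ 2 + 1) / (4 * η) with hc
  -- map the real identities
  have hMc : M.map Complex.ofReal = F * R := by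
    rw [← hφapp, hMfact, _root_.map_mul]
  have hRRTc : R * Rᵀ = 1 := by
    rw [hR, ← hφT, ← _root_.map_mul, hRRT, _root_.map_one]
  have hRS : R * S = S * R := by
    rw [hR, hSφ, ← _root_.map_mul, ← _root_.map_mul, hRσ]
  have hFS : F * S = S * F := by
    rw [hF, hSφ, ← _root_.map_mul, ← _root_.map_mul, hEσ]
  have hFT : Fᵀ = F := by rw [hF, ← hφT, hET]
  have hSS : S * S = -1 := by
    rw [hSφ, ← _root_.map_mul, hsigmasigma, _root_.map_neg, _root_.map_one]
  have hPsum : Pp + Pm + P0 = 1 := by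
    rw [hPp, hPm, hP0, ← _root_.map_add, ← _root_.map_add, hQsum, _root_.map_one]
  have hPp2 : Pp * Pp = Pp := by rw [hPp, ← _root_.map_mul, hQp2]
  have hPm2 : Pm * Pm = Pm := by rw [hPm, ← _root_.map_mul, hQm2]
  have hP02 : P0 * P0 = P0 := by rw [hP0, ← _root_.map_mul, hQ02]
  have hSPp : S * Pp = Pp * S := by rw [hSφ, hPp, ← _root_.map_mul, ← _root_.map_mul, hsigmaQp]
  have hSPm : S * Pm = Pm * S := by rw [hSφ, hPm, ← _root_.map_mul, ← _root_.map_mul, hsigmaQm]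
  have hSP0 : S * P0 = P0 * S := by rw [hSφ, hP0, ← _root_.map_mul, ← _root_.map_mul, hsigmaQ0]
  have hPpH : Ppᴴ = Pp := by rw [hPp, hφH, hQpT]
  have hPmH : Pmᴴ = Pm := by rw [hPm, hφH, hQmT]
  have hP0H : P0ᴴ = P0 := by rw [hP0, hφH, hQ0T]
  have hFPp : F * Pp = ((Real.exp (s * (1 + lam)) : ℝ) : ℂ) • Pp := by
    rw [hF, hPp, ← _root_.map_mul, hEQp, hφsmul]
  have hFPm : F * Pm = ((Real.exp (s * (1 - lam)) : ℝ) : ℂ) • Pm := by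
    rw [hF, hPm, ← _root_.map_mul, hEQm, hφsmul]
  have hFP0 : F * P0 = ((Real.exp (s * 1) : ℝ) : ℂ) • P0 := by
    rw [hF, hP0, ← _root_.map_mul, hEQ0, hφsmul]
  -- G commutes with the projections
  have hG' : G = ((c : ℝ) : ℂ) • (1 : Matrix (Fin 6) (Fin 6) ℂ) + (Complex.I / 2) • S := by
    rw [hG]
  have hGP : ∀ P : Matrix (Fin 6) (Fin 6) ℂ, S * P = P * S → G * P = P * G := by
    intro P hSP
    rw [hG', add_mul, mul_add, smul_mul_assoc, smul_mul_assoc, mul_smul_comm, mul_smul_comm,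
      one_mul, mul_one, hSP]
  -- the rotation preserves G
  have hRGRT : R * G * Rᵀ = G := by
    rw [hG', mul_add, add_mul, mul_smul_comm, mul_smul_comm, smul_mul_assoc, smul_mul_assoc,
      mul_one, hRRTc, hRS, mul_assoc, hRRTc, mul_one]
  -- reduce to the symmetric part
  have hMGMT : (M.map Complex.ofReal) * G * (M.map Complex.ofReal)ᵀ = F * G * F := by
    rw [hMc, Matrix.transpose_mul, hFT]
    calc F * R * G * (Rᵀ * F) = F * (R * G * Rᵀ) * F := by
          simp only [mul_assoc]
      _ = F * G * F := by rw [hRGRT]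
  -- the positivity of G
  have hSH : Sᴴ = -S := by
    rw [hSφ, hφH, hsigmaT, _root_.map_neg]
  set N : Matrix (Fin 6) (Fin 6) ℂ := 1 + Complex.I • S with hN
  have hNH : Nᴴ = N := by
    rw [hN, Matrix.conjTranspose_add, Matrix.conjTranspose_one, Matrix.conjTranspose_smul,
      hSH, Complex.star_def, Complex.conj_I, neg_smul, smul_neg, neg_neg]
  have hNN : Nᴴ * N = (2 : ℂ) • N := by
    have h1 : (Complex.I • S) * (Complex.I • S) = (1 : Matrix (Fin 6) (Fin 6) ℂ) := by
      rw [smul_mul_assoc, mul_smul_comm, smul_smul, hSS, Complex.I_mul_I, neg_smul, one_smul,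
        neg_neg]
    rw [hNH, hN, mul_add, add_mul, add_mul, h1]
    simp only [one_mul, mul_one, two_smul]
    abel
  have hNpsd : N.PosSemidef := by
    have h2 : ((2:ℂ) • N).PosSemidef := by
      rw [← hNN]; exact Matrix.posSemidef_conjTranspose_mul_self N
    have : N = (((1/2 : ℝ) : ℂ)) • ((2:ℂ) • N) := by
      rw [smul_smul]; norm_num
    rw [this]; exact psd_smul h2 (by norm_num)
  have hcpos : 0 ≤ c - 1/2 := by
    rw [hc, sub_nonneg, le_div_iff₀ (by positivity)]
    nlinarith [sq_nonneg (η - 1)]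
  have hGdec : G = ((c - 1/2 : ℝ) : ℂ) • (1 : Matrix (Fin 6) (Fin 6) ℂ)
      + ((1/2 : ℝ) : ℂ) • N := by
    rw [hG', hN]
    ext i j
    simp only [Matrix.add_apply, Matrix.smul_apply, Matrix.one_apply, smul_eq_mul]
    push_cast
    split <;> ring
  have hGpsd : G.PosSemidef := by
    rw [hGdec]
    exact psd_add (psd_smul Matrix.PosSemidef.one hcpos) (psd_smul hNpsd (by norm_num))
  -- coefficients are nonnegative
  have hcoef : ∀ a : ℝ, 0 ≤ a → 0 ≤ 1 - Real.exp (s * a) * Real.exp (s * a) := by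
    intro a ha
    have h1 : Real.exp (s * a) ≤ 1 := Real.exp_le_one_iff.mpr
      (mul_nonpos_of_nonpos_of_nonneg hsle ha)
    nlinarith [Real.exp_pos (s * a)]
  -- assemble
  have hkey : G - (M.map Complex.ofReal) * G * (M.map Complex.ofReal)ᵀ =
      ((1 - Real.exp (s * (1 + lam)) * Real.exp (s * (1 + lam)) : ℝ) : ℂ) • (Pp * G * Pp)
      + ((1 - Real.exp (s * (1 - lam)) * Real.exp (s * (1 - lam)) : ℝ) : ℂ) • (Pm * G * Pm)
      + ((1 - Real.exp (s * 1) * Real.exp (s * 1) : ℝ) : ℂ) • (P0 * G * P0) := by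
    rw [hMGMT]
    have h1 := CPaux.key hFPp (hGP Pp hSPp) hPp2
    have h2 := CPaux.key hFPm (hGP Pm hSPm) hPm2
    have h3 := CPaux.key hFP0 (hGP P0 hSP0) hP02
    calc G - F * G * F = (G - F * G * F) * (Pp + Pm + P0) := by rw [hPsum, mul_one]
      _ = (G - F * G * F) * Pp + (G - F * G * F) * Pm + (G - F * G * F) * P0 := by
          rw [mul_add, mul_add]
      _ = _ := by
          have e1 : ∀ x : ℝ, ((1 - x * x : ℝ) : ℂ) = 1 - (x : ℂ) * (x : ℂ) := by
            intro x; push_cast; ring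
          rw [e1, e1, e1, h1, h2, h3]
  rw [hkey]
  have psd1 : (Pp * G * Pp).PosSemidef := by
    have := hGpsd.mul_mul_conjTranspose_same Pp
    rwa [hPpH] at this
  have psd2 : (Pm * G * Pm).PosSemidef := by
    have := hGpsd.mul_mul_conjTranspose_same Pm
    rwa [hPmH] at this
  have psd3 : (P0 * G * P0).PosSemidef := by
    have := hGpsd.mul_mul_conjTranspose_same P0
    rwa [hP0H] at this
  exact CPaux.psd_add (CPaux.psd_add (CPaux.psd_smul psd1 (hcoef _ (by linarith)))
    (CPaux.psd_smul psd2 (hcoef _ (by linarith)))) (CPaux.psd_smul psd3 (hcoef _ (by norm_num)))
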